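/- arXiv:1507.07055 — 2 statements merged into one kernel-verified Lean document; each statement's English description precedes it below -/
import Mathlib

section
/- Let $J_N$ be a symmetric $N\times N$ real matrix with zero diagonal and non-negative entries, with eigenvalues $\lambda_1(J_N)\le\cdots\le\lambda_N(J_N)$, and let $F_N(\beta)=\log(2^{-N}\sum_{\tau\in\{-1,1\}^N}e^{\frac12\beta\tau'J_N\tau})$. Then for all $0<\beta<1/\|J_N\|$ (operator norm), $F_N(\beta)\le -\frac12\sum_{i=1}^N\log(1-\beta\lambda_i(J_N))$. -/
open Real Finset

/-- Spin value of a Boolean: `true ↦ 1`, `false ↦ -1`. -/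
noncomputable def spin (b : Bool) : ℝ := if b then 1 else -1

/-- The ℓ² operator norm of a real matrix. -/
noncomputable def opNorm {N : ℕ} (J : Matrix (Fin N) (Fin N) ℝ) : ℝ :=
  ‖Matrix.toEuclideanCLM (𝕜 := ℝ) J‖

/-- The quadratic form τ'Jτ. -/
noncomputable def quadForm {N : ℕ} (J : Matrix (Fin N) (Fin N) ℝ) (τ : Fin N → Bool) : ℝ :=
  ∑ i, ∑ j, J i j * spin (τ i) * spin (τ j)

/-- Log-partition function `F_N(β) = log(2^{-N} ∑_τ exp(β τ'Jτ / 2))`. -/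
noncomputable def logPartition {N : ℕ} (J : Matrix (Fin N) (Fin N) ℝ) (β : ℝ) : ℝ :=
  Real.log ((2 : ℝ)⁻¹ ^ N * ∑ τ : Fin N → Bool, Real.exp (β / 2 * quadForm J τ))

open MeasureTheory
open scoped ENNReal

namespace SKBound

/-! ### One-dimensional Gaussian computations -/

noncomputable def gpdf (y : ℝ) : ℝ := (Real.sqrt (2 * π))⁻¹ * Real.exp (-(1/2) * y ^ 2)

lemma gpdf_nonneg (y : ℝ) : 0 ≤ gpdf y := by
  unfold gpdf; positivity

lemma measurable_gpdf : Measurable gpdf := by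
  unfold gpdf
  exact (measurable_const.mul ((measurable_id.pow_const 2).const_mul (-(1/2))).exp)

lemma sqrt_two_pi_pos : 0 < Real.sqrt (2 * π) := Real.sqrt_pos.2 (by positivity)

lemma integrable_gpdf : Integrable gpdf := by
  unfold gpdf
  exact (integrable_exp_neg_mul_sq (by norm_num : (0:ℝ) < 1/2)).const_mul _

lemma integral_gpdf : ∫ y, gpdf y = 1 := by
  unfold gpdf
  rw [MeasureTheory.integral_const_mul, integral_gaussian]
  rw [show π / (1/2 : ℝ) = 2 * π by ring]
  exact inv_mul_cancel₀ (ne_of_gt sqrt_two_pi_pos)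

lemma lintegral_gpdf : ∫⁻ y, ENNReal.ofReal (gpdf y) = 1 := by
  rw [← MeasureTheory.ofReal_integral_eq_lintegral_ofReal integrable_gpdf
    (Filter.Eventually.of_forall gpdf_nonneg), integral_gpdf, ENNReal.ofReal_one]

lemma lintegral_exp_mul_gpdf (t : ℝ) :
    ∫⁻ y, ENNReal.ofReal (Real.exp (t * y) * gpdf y) = ENNReal.ofReal (Real.exp (t ^ 2 / 2)) := by
  have key : ∀ y : ℝ, Real.exp (t * y) * gpdf y = Real.exp (t ^ 2 / 2) * gpdf (y - t) := by
    intro y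
    unfold gpdf
    have e1 : Real.exp (t * y) * Real.exp (-(1/2) * y ^ 2)
        = Real.exp (t ^ 2 / 2) * Real.exp (-(1/2) * (y - t) ^ 2) := by
      rw [← Real.exp_add, ← Real.exp_add]; congr 1; ring
    calc Real.exp (t * y) * ((Real.sqrt (2 * π))⁻¹ * Real.exp (-(1/2) * y ^ 2))
        = (Real.sqrt (2 * π))⁻¹ * (Real.exp (t * y) * Real.exp (-(1/2) * y ^ 2)) := by ring
      _ = Real.exp (t ^ 2 / 2) * ((Real.sqrt (2 * π))⁻¹ * Real.exp (-(1/2) * (y - t) ^ 2)) := by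
          rw [e1]; ring
  simp only [key]
  simp only [ENNReal.ofReal_mul (Real.exp_nonneg _)]
  rw [lintegral_const_mul' _ _ ENNReal.ofReal_ne_top]
  have h2 : ∫⁻ y, ENNReal.ofReal (gpdf (y - t)) = 1 := by
    have := MeasureTheory.lintegral_add_right_eq_self (μ := volume)
      (fun y => ENNReal.ofReal (gpdf y)) (-t)
    simp only [← sub_eq_add_neg] at this
    rw [this, lintegral_gpdf]
  rw [h2, mul_one]

lemma lintegral_gauss_sq {b : ℝ} (hb : 0 < b) :
    ∫⁻ y, ENNReal.ofReal ((Real.sqrt (2 * π))⁻¹ * Real.exp (-b * y ^ 2))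
      = ENNReal.ofReal ((Real.sqrt (2 * b))⁻¹) := by
  have hint : Integrable (fun y : ℝ => (Real.sqrt (2 * π))⁻¹ * Real.exp (-b * y ^ 2)) :=
    (integrable_exp_neg_mul_sq hb).const_mul _
  rw [← MeasureTheory.ofReal_integral_eq_lintegral_ofReal hint
    (Filter.Eventually.of_forall fun y => by positivity)]
  congr 1
  rw [MeasureTheory.integral_const_mul, integral_gaussian]
  have hsq : Real.sqrt (π / b) = Real.sqrt (2 * π) / Real.sqrt (2 * b) := by
    rw [eq_div_iff (ne_of_gt (Real.sqrt_pos.2 (by positivity))), ← Real.sqrt_mul (by positivity)]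
    congr 1
    field_simp
  rw [hsq]
  rw [div_eq_mul_inv, ← mul_assoc, inv_mul_cancel₀ (ne_of_gt sqrt_two_pi_pos), one_mul]

/-! ### Product integrals over `Measure.pi` -/

lemma lintegral_pi_prod {N : ℕ} (φ : Fin N → ℝ → ℝ≥0∞) (hφ : ∀ i, Measurable (φ i)) :
    ∫⁻ x : Fin N → ℝ, ∏ i, φ i (x i) ∂(Measure.pi fun _ => (volume : Measure ℝ))
      = ∏ i, ∫⁻ y, φ i y := by
  classical
  have hmeas : Measurable fun x : Fin N → ℝ => ∏ i, φ i (x i) :=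
    Finset.measurable_prod _ fun i _ => (hφ i).comp (measurable_pi_apply i)
  have key : ∀ s : Finset (Fin N), ∀ x : Fin N → ℝ,
      (∫⋯∫⁻_s, (fun z => ∏ i, φ i (z i)) ∂(fun _ => (volume : Measure ℝ))) x
        = (∏ i ∈ s, ∫⁻ y, φ i y) * ∏ i ∈ sᶜ, φ i (x i) := by
    intro s
    induction s using Finset.induction with
    | empty => intro x; simp
    | @insert i s hi ih =>
      intro x
      rw [MeasureTheory.lmarginal_insert _ hmeas hi]
      simp only [ih]
      have hsplit : ∀ y : ℝ, ∏ j ∈ sᶜ, φ j (Function.update x i y j)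
          = φ i y * ∏ j ∈ sᶜ.erase i, φ j (x j) := by
        intro y
        rw [← Finset.mul_prod_erase sᶜ _ (Finset.mem_compl.2 hi)]
        congr 1
        · rw [Function.update_self]
        · exact Finset.prod_congr rfl fun j hj => by
            rw [Function.update_of_ne (Finset.ne_of_mem_erase hj)]
      simp only [hsplit]
      rw [lintegral_const_mul _ (((hφ i).mul_const _)), lintegral_mul_const _ (hφ i),
        Finset.prod_insert hi, Finset.compl_insert]
      ring
  rw [MeasureTheory.lintegral_eq_lmarginal_univ (fun _ => 0), key Finset.univ (fun _ => 0)]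
  simp

/-! ### Quadratic form -/

noncomputable def Qf {N : ℕ} (J : Matrix (Fin N) (Fin N) ℝ) (x : Fin N → ℝ) : ℝ :=
  ∑ i, ∑ j, J i j * x i * x j

lemma measurable_Qf {N : ℕ} (J : Matrix (Fin N) (Fin N) ℝ) : Measurable (Qf J) := by
  unfold Qf
  exact Finset.measurable_sum _ fun i _ => Finset.measurable_sum _ fun j _ =>
    (((measurable_pi_apply i).const_mul _).mul (measurable_pi_apply j))

lemma Qf_update {N : ℕ} (J : Matrix (Fin N) (Fin N) ℝ) (hsym : ∀ p q, J p q = J q p)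
    (hdiag : ∀ p, J p p = 0) (i : Fin N) (z : Fin N → ℝ) (v : ℝ) :
    Qf J (Function.update z i v)
      = v * (2 * ∑ j, J i j * Function.update z i 0 j) + Qf J (Function.update z i 0) := by
  classical
  set w := Function.update z i 0 with hw
  have hu : ∀ q, Function.update z i v q = w q + (if q = i then v else 0) := by
    intro q
    by_cases h : q = i
    · subst h; simp [hw]
    · simp [hw, Function.update_of_ne h, h]
  simp only [Qf, hu]
  simp only [mul_add, add_mul, Finset.sum_add_distrib]
  have e2 : ∀ p : Fin N, ∑ q, J p q * w p * (if q = i then v else 0) = J p i * w p * v := by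
    intro p
    rw [Finset.sum_eq_single i]
    · simp
    · intro q _ hq; simp [hq]
    · intro h; exact absurd (Finset.mem_univ i) h
  have e3 : ∀ p : Fin N, ∑ q, J p q * (if p = i then v else 0) * w q
      = (if p = i then v * ∑ q, J i q * w q else 0) := by
    intro p
    by_cases h : p = i
    · subst h
      simp only [eq_self_iff_true, if_true]
      rw [Finset.mul_sum]
      exact Finset.sum_congr rfl fun q _ => by ring
    · simp [h]
  have e4 : ∀ p : Fin N, ∑ q, J p q * (if p = i then v else 0) * (if q = i then v else 0) = 0 := by
    intro p
    apply Finset.sum_eq_zero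
    intro q _
    by_cases h : p = i
    · by_cases h' : q = i
      · subst h; subst h'; simp [hdiag]
      · simp [h']
    · simp [h]
  simp only [e2, e3, e4, Finset.sum_const_zero, add_zero, Finset.sum_ite_eq' Finset.univ i,
    Finset.mem_univ, if_pos]
  have e5 : ∑ p, J p i * w p * v = v * ∑ j, J i j * w j := by
    rw [Finset.mul_sum]
    exact Finset.sum_congr rfl fun p _ => by rw [hsym p i]; ring
  rw [e5]
  ring

/-! ### Interpolation setup -/

lemma spin_sq (b : Bool) : spin b ^ 2 = 1 := by cases b <;> simp [spin]

lemma spin_not (b : Bool) : spin (!b) = -spin b := by cases b <;> simp [spin]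

noncomputable def mixv {N : ℕ} (s : Fin N → Bool) (x : Fin N → ℝ) (τ : Fin N → Bool) :
    Fin N → ℝ := fun i => if s i then x i else spin (τ i)

lemma measurable_mixv {N : ℕ} (s τ : Fin N → Bool) :
    Measurable fun x : Fin N → ℝ => mixv s x τ := by
  apply measurable_pi_lambda
  intro i
  by_cases h : s i
  · simpa [mixv, h] using measurable_pi_apply i
  · simpa [mixv, h] using measurable_const

noncomputable def FF {N : ℕ} (J : Matrix (Fin N) (Fin N) ℝ) (β : ℝ) (s : Fin N → Bool)
    (x : Fin N → ℝ) : ℝ≥0∞ :=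
  (∑ τ : Fin N → Bool, ENNReal.ofReal (Real.exp (β / 2 * Qf J (mixv s x τ)))) *
    ∏ i, ENNReal.ofReal (gpdf (x i))

lemma measurable_FF {N : ℕ} (J : Matrix (Fin N) (Fin N) ℝ) (β : ℝ) (s : Fin N → Bool) :
    Measurable (FF J β s) := by
  apply Measurable.mul
  · exact Finset.measurable_sum _ fun τ _ =>
      ((((measurable_Qf J).comp (measurable_mixv s τ)).const_mul (β / 2)).exp).ennreal_ofReal
  · exact Finset.measurable_prod _ fun i _ =>
      ((measurable_gpdf.comp (measurable_pi_apply i))).ennreal_ofReal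

lemma step {N : ℕ} (J : Matrix (Fin N) (Fin N) ℝ) (hsym : ∀ p q, J p q = J q p)
    (hdiag : ∀ p, J p p = 0) (β : ℝ) (i : Fin N) (s : Fin N → Bool) (hs : s i = false) :
    ∫⁻ x, FF J β s x ∂(Measure.pi fun _ => (volume : Measure ℝ))
      ≤ ∫⁻ x, FF J β (Function.update s i true) x ∂(Measure.pi fun _ => (volume : Measure ℝ)) := by
  classical
  apply MeasureTheory.lintegral_le_of_lmarginal_le {i} (measurable_FF J β s)
    (measurable_FF J β _)
  rw [MeasureTheory.lmarginal_singleton, MeasureTheory.lmarginal_singleton]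
  intro x
  show ∫⁻ y, FF J β s (Function.update x i y) ∂volume
      ≤ ∫⁻ y, FF J β (Function.update s i true) (Function.update x i y) ∂volume
  set z : (Fin N → Bool) → (Fin N → ℝ) := fun τ => mixv s x τ with hz
  set L : (Fin N → Bool) → ℝ := fun τ => 2 * ∑ j, J i j * Function.update (z τ) i 0 j with hL
  set C : (Fin N → Bool) → ℝ := fun τ => Qf J (Function.update (z τ) i 0) with hC
  set P : ℝ≥0∞ := ∏ j ∈ Finset.univ.erase i, ENNReal.ofReal (gpdf (x j)) with hP
  have hprod : ∀ y : ℝ, ∏ j, ENNReal.ofReal (gpdf (Function.update x i y j))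
      = ENNReal.ofReal (gpdf y) * P := by
    intro y
    rw [← Finset.mul_prod_erase Finset.univ _ (Finset.mem_univ i), Function.update_self]
    congr 1
    exact Finset.prod_congr rfl fun j hj => by
      rw [Function.update_of_ne (Finset.ne_of_mem_erase hj)]
  have hmixL : ∀ (y : ℝ) τ, mixv s (Function.update x i y) τ = z τ := by
    intro y τ; funext j
    by_cases h : j = i
    · subst h; simp [mixv, hz, hs]
    · simp [mixv, hz, Function.update_of_ne h]
  have hzQ : ∀ τ, Qf J (z τ) = spin (τ i) * L τ + C τ := by
    intro τ
    have hzi : z τ = Function.update (z τ) i (spin (τ i)) := by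
      rw [show spin (τ i) = z τ i by simp [hz, mixv, hs]]
      exact (Function.update_eq_self i (z τ)).symm
    conv_lhs => rw [hzi]
    exact Qf_update J hsym hdiag i (z τ) (spin (τ i))
  have hmixR : ∀ (y : ℝ) τ, mixv (Function.update s i true) (Function.update x i y) τ
      = Function.update (z τ) i y := by
    intro y τ; funext j
    by_cases h : j = i
    · subst h; simp [mixv]
    · simp [mixv, hz, Function.update_of_ne h]
  have hLHS : ∫⁻ y, FF J β s (Function.update x i y) ∂volume
      = (∑ τ : Fin N → Bool,
          ENNReal.ofReal (Real.exp (β / 2 * (spin (τ i) * L τ + C τ)))) * P := by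
    have h1 : ∀ y, FF J β s (Function.update x i y)
        = ((∑ τ : Fin N → Bool,
            ENNReal.ofReal (Real.exp (β / 2 * (spin (τ i) * L τ + C τ)))) * P)
            * ENNReal.ofReal (gpdf y) := by
      intro y
      rw [FF]
      simp only [hmixL, hzQ, hprod]
      ring
    simp only [h1]
    rw [lintegral_const_mul _ measurable_gpdf.ennreal_ofReal, lintegral_gpdf, mul_one]
  have hRHS : ∫⁻ y, FF J β (Function.update s i true) (Function.update x i y) ∂volume
      = (∑ τ : Fin N → Bool, ENNReal.ofReal (Real.exp (β / 2 * C τ))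
          * ENNReal.ofReal (Real.exp ((β / 2 * L τ) ^ 2 / 2))) * P := by
    have h1 : ∀ y, FF J β (Function.update s i true) (Function.update x i y)
        = ∑ τ : Fin N → Bool, (ENNReal.ofReal (Real.exp (β / 2 * C τ)) * P)
            * ENNReal.ofReal (Real.exp (β / 2 * L τ * y) * gpdf y) := by
      intro y
      rw [FF]
      simp only [hmixR, hprod]
      rw [Finset.sum_mul]
      refine Finset.sum_congr rfl fun τ _ => ?_
      rw [Qf_update J hsym hdiag i (z τ) y]
      rw [show β / 2 * (y * (2 * ∑ j, J i j * Function.update (z τ) i 0 j) + C τ)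
            = β / 2 * C τ + β / 2 * L τ * y by rw [hL]; ring]
      rw [Real.exp_add, ENNReal.ofReal_mul (Real.exp_nonneg _),
        ENNReal.ofReal_mul (Real.exp_nonneg _)]
      ring
    simp only [h1]
    rw [MeasureTheory.lintegral_finset_sum _ (fun τ _ =>
      ((Measurable.ennreal_ofReal (f := fun y => Real.exp (β / 2 * L τ * y) * gpdf y) ((measurable_id'.const_mul (β / 2 * L τ)).exp.mul measurable_gpdf))).const_mul _)]
    rw [Finset.sum_mul]
    refine Finset.sum_congr rfl fun τ _ => ?_
    rw [lintegral_const_mul _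
      (Measurable.ennreal_ofReal (f := fun y => Real.exp (β / 2 * L τ * y) * gpdf y) ((measurable_id'.const_mul (β / 2 * L τ)).exp.mul measurable_gpdf))]
    have hmul : ∀ y : ℝ, Real.exp (β / 2 * L τ * y) * gpdf y = Real.exp ((β / 2 * L τ) * y) * gpdf y :=
      fun y => rfl
    rw [lintegral_exp_mul_gpdf (β / 2 * L τ)]
    ring
  rw [hLHS, hRHS]
  refine mul_le_mul_left ?_ P
  -- pairing argument
  set G : (Fin N → Bool) → ℝ≥0∞ := fun τ =>
    ENNReal.ofReal (Real.exp (β / 2 * (spin (τ i) * L τ + C τ))) with hG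
  set R : (Fin N → Bool) → ℝ≥0∞ := fun τ =>
    ENNReal.ofReal (Real.exp (β / 2 * C τ))
      * ENNReal.ofReal (Real.exp ((β / 2 * L τ) ^ 2 / 2)) with hR
  have hflipinv : Function.Involutive (fun τ : Fin N → Bool => Function.update τ i (!τ i)) := by
    intro τ; funext j
    by_cases h : j = i
    · subst h; simp
    · simp [Function.update_of_ne h]
  set e : Equiv.Perm (Fin N → Bool) := hflipinv.toPerm with he'
  have he : ∀ τ, e τ = Function.update τ i (!τ i) := fun τ => rfl
  have hze : ∀ τ, Function.update (z (e τ)) i 0 = Function.update (z τ) i 0 := by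
    intro τ; funext j
    by_cases h : j = i
    · subst h; simp
    · simp only [Function.update_of_ne h]
      simp [hz, mixv, he, Function.update_of_ne h]
  have hLe : ∀ τ, L (e τ) = L τ := by
    intro τ; simp only [hL]; rw [hze τ]
  have hCe : ∀ τ, C (e τ) = C τ := by
    intro τ; simp only [hC]; rw [hze τ]
  have hspine : ∀ τ, spin (e τ i) = - spin (τ i) := by
    intro τ
    rw [he, Function.update_self, spin_not]
  have key : ∀ τ, G τ + G (e τ) ≤ 2 * R τ := by
    intro τ
    simp only [hG]
    rw [hLe, hCe, hspine]
    rw [← ENNReal.ofReal_add (Real.exp_nonneg _) (Real.exp_nonneg _)]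
    have hcosh : Real.exp (β / 2 * (spin (τ i) * L τ + C τ))
        + Real.exp (β / 2 * (-spin (τ i) * L τ + C τ))
        ≤ Real.exp (β / 2 * C τ) * (2 * Real.exp ((β / 2 * L τ) ^ 2 / 2)) := by
      set u := β / 2 * (spin (τ i) * L τ) with hu
      have h1 : β / 2 * (spin (τ i) * L τ + C τ) = β / 2 * C τ + u := by rw [hu]; ring
      have h2 : β / 2 * (-spin (τ i) * L τ + C τ) = β / 2 * C τ + -u := by rw [hu]; ring
      rw [h1, h2, Real.exp_add, Real.exp_add, ← mul_add]
      refine mul_le_mul_of_nonneg_left ?_ (Real.exp_nonneg _)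
      rw [show Real.exp u + Real.exp (-u) = 2 * Real.cosh u from by rw [Real.cosh_eq]; ring]
      have h4 := Real.cosh_le_exp_half_sq u
      have hu2 : u ^ 2 = (β / 2 * L τ) ^ 2 := by
        have hs2 : spin (τ i) ^ 2 = 1 := spin_sq (τ i)
        calc u ^ 2 = (β / 2 * L τ) ^ 2 * spin (τ i) ^ 2 := by rw [hu]; ring
          _ = (β / 2 * L τ) ^ 2 := by rw [hs2, mul_one]
      rw [hu2] at h4
      linarith
    calc ENNReal.ofReal (Real.exp (β / 2 * (spin (τ i) * L τ + C τ))
            + Real.exp (β / 2 * (-spin (τ i) * L τ + C τ)))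
        ≤ ENNReal.ofReal (Real.exp (β / 2 * C τ) * (2 * Real.exp ((β / 2 * L τ) ^ 2 / 2))) :=
          ENNReal.ofReal_le_ofReal hcosh
      _ = 2 * R τ := by
          rw [ENNReal.ofReal_mul (Real.exp_nonneg _),
            ENNReal.ofReal_mul (by norm_num : (0:ℝ) ≤ 2)]
          rw [hR]
          simp only [ENNReal.ofReal_ofNat]
          ring
  have hsum : ∑ τ, G (e τ) = ∑ τ, G τ := Equiv.sum_comp e G
  have h2S : 2 * ∑ τ, G τ ≤ 2 * ∑ τ, R τ := by
    calc 2 * ∑ τ, G τ = ∑ τ, G τ + ∑ τ, G (e τ) := by rw [hsum, two_mul]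
      _ = ∑ τ, (G τ + G (e τ)) := Finset.sum_add_distrib.symm
      _ ≤ ∑ τ, 2 * R τ := Finset.sum_le_sum fun τ _ => key τ
      _ = 2 * ∑ τ, R τ := by rw [Finset.mul_sum]
  exact (ENNReal.mul_le_mul_iff_right (by norm_num) (by norm_num)).mp h2S

lemma measurable_gpdf_coord {N : ℕ} (i : Fin N) :
    Measurable fun x : Fin N → ℝ => ENNReal.ofReal (gpdf (x i)) :=
  (measurable_gpdf.comp (measurable_pi_apply i)).ennreal_ofReal

lemma measurable_gaussBody {N : ℕ} (J : Matrix (Fin N) (Fin N) ℝ) (β : ℝ) :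
    Measurable fun x : Fin N → ℝ =>
      ENNReal.ofReal (Real.exp (β / 2 * Qf J x) * ∏ i, gpdf (x i)) := by
  apply Measurable.ennreal_ofReal
  exact (((measurable_Qf J).const_mul (β / 2)).exp).mul
    (Finset.measurable_prod _ fun i _ =>
      (measurable_gpdf.comp (measurable_pi_apply i) : Measurable fun x : Fin N → ℝ => gpdf (x i)))

lemma chain {N : ℕ} (J : Matrix (Fin N) (Fin N) ℝ) (hsym : ∀ p q, J p q = J q p)
    (hdiag : ∀ p, J p p = 0) (β : ℝ) :
    ∫⁻ x, FF J β (fun _ => false) x ∂(Measure.pi fun _ => (volume : Measure ℝ))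
      ≤ ∫⁻ x, FF J β (fun _ => true) x ∂(Measure.pi fun _ => (volume : Measure ℝ)) := by
  classical
  have key : ∀ t : Finset (Fin N),
      ∫⁻ x, FF J β (fun _ => false) x ∂(Measure.pi fun _ => (volume : Measure ℝ))
        ≤ ∫⁻ x, FF J β (fun i => decide (i ∈ t)) x
            ∂(Measure.pi fun _ => (volume : Measure ℝ)) := by
    intro t
    induction t using Finset.induction with
    | empty => simp
    | @insert i t hi ih =>
      refine le_trans ih ?_
      have hupd : (fun j => decide (j ∈ insert i t))
          = Function.update (fun j => decide (j ∈ t)) i true := by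
        funext j
        by_cases h : j = i
        · subst h; simp
        · simp [Function.update_of_ne h, Finset.mem_insert, h]
      rw [hupd]
      exact step J hsym hdiag β i _ (by simp [hi])
  have h := key Finset.univ
  have : (fun j : Fin N => decide (j ∈ Finset.univ)) = fun _ => true := by
    funext j; simp
  rwa [this] at h

lemma eval_false {N : ℕ} (J : Matrix (Fin N) (Fin N) ℝ) (β : ℝ) :
    ∫⁻ x, FF J β (fun _ => false) x ∂(Measure.pi fun _ => (volume : Measure ℝ))
      = ∑ τ : Fin N → Bool, ENNReal.ofReal (Real.exp (β / 2 * quadForm J τ)) := by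
  have h1 : ∀ (x : Fin N → ℝ) τ, mixv (fun _ => false) x τ = fun i => spin (τ i) := by
    intro x τ; funext j; simp [mixv]
  have h2 : ∀ τ : Fin N → Bool, Qf J (fun i => spin (τ i)) = quadForm J τ := fun τ => rfl
  have h3 : ∀ x : Fin N → ℝ, FF J β (fun _ => false) x
      = (∑ τ : Fin N → Bool, ENNReal.ofReal (Real.exp (β / 2 * quadForm J τ)))
          * ∏ i, ENNReal.ofReal (gpdf (x i)) := by
    intro x
    rw [FF]
    simp only [h1, h2]
  simp only [h3]
  rw [lintegral_const_mul _ (Finset.measurable_prod _ fun i _ => measurable_gpdf_coord i)]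
  rw [lintegral_pi_prod _ (fun i => measurable_gpdf.ennreal_ofReal)]
  simp [lintegral_gpdf]

lemma eval_true {N : ℕ} (J : Matrix (Fin N) (Fin N) ℝ) (β : ℝ) :
    ∫⁻ x, FF J β (fun _ => true) x ∂(Measure.pi fun _ => (volume : Measure ℝ))
      = 2 ^ N * ∫⁻ x, ENNReal.ofReal (Real.exp (β / 2 * Qf J x) * ∏ i, gpdf (x i))
          ∂(Measure.pi fun _ => (volume : Measure ℝ)) := by
  have h1 : ∀ (x : Fin N → ℝ) (τ : Fin N → Bool), mixv (fun _ => true) x τ = x := by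
    intro x τ; funext j; simp [mixv]
  have h3 : ∀ x : Fin N → ℝ, FF J β (fun _ => true) x
      = 2 ^ N * ENNReal.ofReal (Real.exp (β / 2 * Qf J x) * ∏ i, gpdf (x i)) := by
    intro x
    rw [FF]
    simp only [h1]
    rw [Finset.sum_const, ENNReal.ofReal_mul (Real.exp_nonneg _),
      ENNReal.ofReal_prod_of_nonneg (fun i _ => gpdf_nonneg (x i))]
    simp only [Finset.card_univ]
    rw [Fintype.card_fun]
    simp [nsmul_eq_mul, mul_assoc]
  simp only [h3]
  rw [lintegral_const_mul _ (measurable_gaussBody J β)]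

/-! ### Spectral computations -/

lemma toCLM_eigen {N : ℕ} (J : Matrix (Fin N) (Fin N) ℝ) (hJ : J.IsHermitian) (k : Fin N) :
    Matrix.toEuclideanCLM (𝕜 := ℝ) J (hJ.eigenvectorBasis k)
      = hJ.eigenvalues k • hJ.eigenvectorBasis k := by
  apply WithLp.ofLp_injective
  rw [Matrix.ofLp_toEuclideanCLM]
  rw [hJ.mulVec_eigenvectorBasis k]
  simp

lemma toCLM_apply {N : ℕ} (J : Matrix (Fin N) (Fin N) ℝ) (v : EuclideanSpace ℝ (Fin N))
    (i : Fin N) :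
    Matrix.toEuclideanCLM (𝕜 := ℝ) J v i = ∑ j, J i j * v j := by
  have h2 := congrFun (Matrix.ofLp_toEuclideanCLM (𝕜 := ℝ) J v) i
  simpa [Matrix.toLin'_apply, Matrix.mulVec, dotProduct] using h2

lemma Qf_eigen {N : ℕ} (J : Matrix (Fin N) (Fin N) ℝ) (hJ : J.IsHermitian)
    (x : EuclideanSpace ℝ (Fin N)) :
    Qf J x = ∑ k, hJ.eigenvalues k * (hJ.eigenvectorBasis.repr x k) ^ 2 := by
  classical
  set B := hJ.eigenvectorBasis with hB
  set lam := hJ.eigenvalues with hlam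
  set y : Fin N → ℝ := fun k => B.repr x k with hy
  set T := Matrix.toEuclideanCLM (𝕜 := ℝ) J with hT
  have hQf : Qf J x = (inner ℝ x (T x) : ℝ) := by
    rw [PiLp.inner_apply]
    simp only [RCLike.inner_apply, conj_trivial]
    rw [Qf]
    refine Finset.sum_congr rfl fun i _ => ?_
    rw [hT, toCLM_apply J x i, Finset.sum_mul]
    exact Finset.sum_congr rfl fun j _ => by ring
  have hxsum : x = ∑ k, y k • B k := (B.sum_repr x).symm
  have hTx2 : T x = ∑ k, (lam k * y k) • B k := by
    conv_lhs => rw [hxsum]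
    rw [map_sum]
    refine Finset.sum_congr rfl fun k _ => ?_
    rw [_root_.map_smul, hT, toCLM_eigen J hJ k, smul_smul, mul_comm]
  rw [hQf, hTx2, inner_sum]
  simp only [real_inner_smul_right]
  have hinner : ∀ k, (inner ℝ x (B k) : ℝ) = y k := fun k => by
    rw [real_inner_comm, ← OrthonormalBasis.repr_apply_apply]
  refine Finset.sum_congr rfl fun k _ => ?_
  rw [hinner k]
  ring

lemma eig_abs_le {N : ℕ} (J : Matrix (Fin N) (Fin N) ℝ) (hJ : J.IsHermitian) (k : Fin N) :
    |hJ.eigenvalues k| ≤ opNorm J := by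
  have h1 : ‖Matrix.toEuclideanCLM (𝕜 := ℝ) J (hJ.eigenvectorBasis k)‖
      ≤ opNorm J * ‖hJ.eigenvectorBasis k‖ := ContinuousLinearMap.le_opNorm _ _
  rw [toCLM_eigen J hJ k, norm_smul] at h1
  have hn : ‖hJ.eigenvectorBasis k‖ = 1 := hJ.eigenvectorBasis.orthonormal.1 k
  rw [hn, mul_one, mul_one, Real.norm_eq_abs] at h1
  exact h1

/-! ### The Gaussian integral -/

lemma norm_sq_sum {N : ℕ} (x : EuclideanSpace ℝ (Fin N)) :
    ∑ i, (x i) ^ 2 = ‖x‖ ^ 2 := by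
  rw [EuclideanSpace.norm_eq, Real.sq_sqrt (Finset.sum_nonneg fun i _ => sq_nonneg _)]
  simp [Real.norm_eq_abs, sq_abs]

lemma eval_gauss {N : ℕ} (J : Matrix (Fin N) (Fin N) ℝ) (hJ : J.IsHermitian) (β : ℝ)
    (hev : ∀ k, β * hJ.eigenvalues k < 1) :
    ∫⁻ x, ENNReal.ofReal (Real.exp (β / 2 * Qf J x) * ∏ i, gpdf (x i))
        ∂(Measure.pi fun _ => (volume : Measure ℝ))
      = ∏ k, ENNReal.ofReal ((Real.sqrt (1 - β * hJ.eigenvalues k))⁻¹) := by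
  classical
  set lam := hJ.eigenvalues with hlam
  set B := hJ.eigenvectorBasis with hB
  set U := B.repr with hU
  -- the diagonal integrand
  set φ : Fin N → ℝ → ℝ≥0∞ := fun k t =>
    ENNReal.ofReal ((Real.sqrt (2 * π))⁻¹ * Real.exp (-((1 - β * lam k) / 2) * t ^ 2)) with hφ
  have hφm : ∀ k, Measurable (φ k) := by
    intro k
    exact (((measurable_id'.pow_const 2).const_mul _).exp.const_mul _).ennreal_ofReal
  -- pointwise identity
  have hpoint : ∀ x : EuclideanSpace ℝ (Fin N),
      ENNReal.ofReal (Real.exp (β / 2 * Qf J x) * ∏ i, gpdf (x i)) = ∏ k, φ k (U x k) := by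
    intro x
    have hreal : Real.exp (β / 2 * Qf J x) * ∏ i, gpdf (x i)
        = ∏ k, (Real.sqrt (2 * π))⁻¹ * Real.exp (-((1 - β * lam k) / 2) * (U x k) ^ 2) := by
      have e1 : ∏ i, gpdf (x i)
          = (∏ _i : Fin N, (Real.sqrt (2 * π))⁻¹) * Real.exp (∑ i, -(1/2) * (x i) ^ 2) := by
        rw [Real.exp_sum, ← Finset.prod_mul_distrib]
        exact Finset.prod_congr rfl fun i _ => rfl
      have e2 : ∑ i, -(1/2 : ℝ) * (x i) ^ 2 = ∑ k, -(1/2 : ℝ) * (U x k) ^ 2 := by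
        rw [← Finset.mul_sum, ← Finset.mul_sum, norm_sq_sum x, norm_sq_sum (U x),
          LinearIsometryEquiv.norm_map]
      rw [Qf_eigen J hJ x, e1, e2]
      rw [Finset.prod_mul_distrib, ← Real.exp_sum]
      rw [mul_left_comm, ← Real.exp_add]
      congr 1
      rw [Finset.mul_sum, ← Finset.sum_add_distrib]
      congr 1
      exact Finset.sum_congr rfl fun k _ => by ring
    rw [hreal, ENNReal.ofReal_prod_of_nonneg (fun k _ => by positivity)]
  -- change of variables
  have hfm : Measurable fun z : Fin N → ℝ =>
      ENNReal.ofReal (Real.exp (β / 2 * Qf J z) * ∏ i, gpdf (z i)) := measurable_gaussBody J β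
  have mp1 := EuclideanSpace.volume_preserving_symm_measurableEquiv_toLp (Fin N)
  have mp2 : MeasurePreserving (⇑B.repr) volume volume := B.measurePreserving_repr
  have hcoord : ∀ k, Measurable fun y : EuclideanSpace ℝ (Fin N) => y k := fun k =>
    (measurable_pi_apply k).comp (MeasurableEquiv.toLp 2 (Fin N → ℝ)).symm.measurable
  have hφprodE : Measurable fun y : EuclideanSpace ℝ (Fin N) => ∏ k, φ k (y k) :=
    Finset.measurable_prod _ fun k _ => (hφm k).comp (hcoord k)
  have hφprodPi : Measurable fun z : Fin N → ℝ => ∏ k, φ k (z k) :=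
    Finset.measurable_prod _ fun k _ => (hφm k).comp (measurable_pi_apply k)
  calc ∫⁻ x, ENNReal.ofReal (Real.exp (β / 2 * Qf J x) * ∏ i, gpdf (x i))
          ∂(Measure.pi fun _ => (volume : Measure ℝ))
      = ∫⁻ z, ENNReal.ofReal (Real.exp (β / 2 * Qf J z) * ∏ i, gpdf (z i))
          ∂(volume : Measure (Fin N → ℝ)) := by rw [← MeasureTheory.volume_pi]
    _ = ∫⁻ x : EuclideanSpace ℝ (Fin N),
          ENNReal.ofReal (Real.exp (β / 2 * Qf J ((MeasurableEquiv.toLp 2 (Fin N → ℝ)).symm x))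
            * ∏ i, gpdf (((MeasurableEquiv.toLp 2 (Fin N → ℝ)).symm x) i)) ∂volume :=
        (mp1.lintegral_comp hfm).symm
    _ = ∫⁻ x : EuclideanSpace ℝ (Fin N), ∏ k, φ k (U x k) ∂volume :=
        lintegral_congr fun x => hpoint x
    _ = ∫⁻ y : EuclideanSpace ℝ (Fin N), ∏ k, φ k (y k) ∂volume :=
        mp2.lintegral_comp hφprodE
    _ = ∫⁻ z : Fin N → ℝ, ∏ k, φ k (z k) ∂volume := mp1.lintegral_comp hφprodPi
    _ = ∏ k, ∫⁻ t, φ k t ∂volume := by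
        rw [MeasureTheory.volume_pi]
        exact lintegral_pi_prod φ hφm
    _ = ∏ k, ENNReal.ofReal ((Real.sqrt (1 - β * lam k))⁻¹) := by
        refine Finset.prod_congr rfl fun k _ => ?_
        have hb : 0 < (1 - β * lam k) / 2 := by linarith [hev k]
        have h := lintegral_gauss_sq hb
        rw [show 2 * ((1 - β * lam k) / 2) = 1 - β * lam k by ring] at h
        exact h

end SKBound

theorem stmt0 {N : ℕ} (J : Matrix (Fin N) (Fin N) ℝ) (hJ : J.IsHermitian)
    (hdiag : ∀ i, J i i = 0) (hpos : ∀ i j, 0 ≤ J i j)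
    (β : ℝ) (hβ0 : 0 < β) (hβ : β < 1 / opNorm J) :
    logPartition J β ≤ - (1 / 2) * ∑ i, Real.log (1 - β * hJ.eigenvalues i) := by
  classical
  have hop0 : 0 ≤ opNorm J := norm_nonneg _
  have hop : 0 < opNorm J := by
    rcases hop0.lt_or_eq with h | h
    · exact h
    · exfalso
      rw [← h] at hβ
      simp at hβ
      linarith
  have hβop : β * opNorm J < 1 := by
    have h := (lt_div_iff₀ hop).mp hβ
    linarith
  have hev : ∀ k, β * hJ.eigenvalues k < 1 := by
    intro k
    have h1 : hJ.eigenvalues k ≤ opNorm J := (abs_le.mp (SKBound.eig_abs_le J hJ k)).2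
    calc β * hJ.eigenvalues k ≤ β * opNorm J := mul_le_mul_of_nonneg_left h1 hβ0.le
      _ < 1 := hβop
  have h1m : ∀ k, 0 < 1 - β * hJ.eigenvalues k := fun k => by linarith [hev k]
  have hsym : ∀ p q, J p q = J q p := by
    intro p q
    have h := congrFun (congrFun hJ p) q
    simp only [Matrix.conjTranspose_apply, star_trivial] at h
    exact h.symm
  have main := SKBound.chain J hsym hdiag β
  rw [SKBound.eval_false, SKBound.eval_true, SKBound.eval_gauss J hJ β hev] at main
  have hreal : (∑ τ : Fin N → Bool, Real.exp (β / 2 * quadForm J τ))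
      ≤ 2 ^ N * ∏ k, (Real.sqrt (1 - β * hJ.eigenvalues k))⁻¹ := by
    have lhs_eq : ENNReal.ofReal (∑ τ : Fin N → Bool, Real.exp (β / 2 * quadForm J τ))
        = ∑ τ : Fin N → Bool, ENNReal.ofReal (Real.exp (β / 2 * quadForm J τ)) :=
      ENNReal.ofReal_sum_of_nonneg fun τ _ => Real.exp_nonneg _
    have rhs_eq : (2 : ℝ≥0∞) ^ N * ∏ k, ENNReal.ofReal ((Real.sqrt (1 - β * hJ.eigenvalues k))⁻¹)
        = ENNReal.ofReal (2 ^ N * ∏ k, (Real.sqrt (1 - β * hJ.eigenvalues k))⁻¹) := by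
      rw [ENNReal.ofReal_mul (by positivity), ENNReal.ofReal_pow (by norm_num),
        ENNReal.ofReal_prod_of_nonneg (fun k _ => by positivity), ENNReal.ofReal_ofNat]
    rw [← lhs_eq, rhs_eq] at main
    exact (ENNReal.ofReal_le_ofReal_iff (by positivity)).mp main
  have hApos : 0 < (2 : ℝ)⁻¹ ^ N * ∑ τ : Fin N → Bool, Real.exp (β / 2 * quadForm J τ) := by
    apply mul_pos (by positivity)
    exact Finset.sum_pos (fun τ _ => Real.exp_pos _) Finset.univ_nonempty
  have hPpos : ∀ k, (0:ℝ) < (Real.sqrt (1 - β * hJ.eigenvalues k))⁻¹ := fun k =>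
    inv_pos.2 (Real.sqrt_pos.2 (h1m k))
  have hle : (2 : ℝ)⁻¹ ^ N * ∑ τ : Fin N → Bool, Real.exp (β / 2 * quadForm J τ)
      ≤ ∏ k, (Real.sqrt (1 - β * hJ.eigenvalues k))⁻¹ := by
    rw [inv_pow, inv_mul_le_iff₀ (by positivity)]
    exact hreal
  have hlog := Real.log_le_log hApos hle
  rw [Real.log_prod (fun k _ => ne_of_gt (hPpos k))] at hlog
  calc logPartition J β
      = Real.log ((2:ℝ)⁻¹ ^ N * ∑ τ : Fin N → Bool, Real.exp (β / 2 * quadForm J τ)) := rfl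
    _ ≤ ∑ k, Real.log ((Real.sqrt (1 - β * hJ.eigenvalues k))⁻¹) := hlog
    _ = - (1 / 2) * ∑ k, Real.log (1 - β * hJ.eigenvalues k) := by
        have hterm : ∀ k ∈ Finset.univ, Real.log ((Real.sqrt (1 - β * hJ.eigenvalues k))⁻¹)
            = -(1/2) * Real.log (1 - β * hJ.eigenvalues k) := by
          intro k _
          rw [Real.log_inv, Real.log_sqrt (h1m k).le]
          ring
        rw [Finset.sum_congr rfl hterm, ← Finset.mul_sum]
end

section
/- Let $J_N$ be a symmetric $N\times N$ real matrix with zero diagonal and non-negative entries, and $F_N(\beta)=\log(2^{-N}\sum_{\tau\in\{-1,1\}^N}e^{\frac12\beta\tau'J_N\tau})$. Then for every $\beta>0$, $F_N(\beta)\ge \sum_{1\le i<j\le N}\log\cosh(\beta J_N(i,j))$. -/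
open Real Finset

lemma spin_cases (b : Bool) : spin b = 1 ∨ spin b = -1 := by
  cases b <;> simp [spin]

lemma exp_mul_pm (x s : ℝ) (hs : s = 1 ∨ s = -1) :
    Real.exp (x * s) = Real.cosh x * (1 + s * Real.tanh x) := by
  have hc : Real.cosh x ≠ 0 := (Real.cosh_pos x).ne'
  rcases hs with h | h <;> subst h
  · rw [mul_one, Real.tanh_eq_sinh_div_cosh, ← Real.cosh_add_sinh]
    field_simp
  · rw [mul_neg_one]
    have h2 : Real.cosh x * (1 + -1 * Real.tanh x) = Real.cosh x - Real.sinh x := by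
      rw [Real.tanh_eq_sinh_div_cosh]
      field_simp
      ring
    rw [h2, Real.cosh_sub_sinh]

lemma sum_spin_prod_nonneg {N : ℕ} (A : Finset (Fin N × Fin N)) :
    0 ≤ ∑ τ : Fin N → Bool, ∏ p ∈ A, spin (τ p.1) * spin (τ p.2) := by
  classical
  have key : ∀ τ : Fin N → Bool, ∏ p ∈ A, spin (τ p.1) * spin (τ p.2) =
      ∏ j, spin (τ j) ^ ((A.filter (fun p => p.1 = j)).card
        + (A.filter (fun p => p.2 = j)).card) := by
    intro τ
    have h1 : ∏ p ∈ A, spin (τ p.1) = ∏ j, spin (τ j) ^ (A.filter (fun p => p.1 = j)).card := by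
      rw [← Finset.prod_fiberwise' A (fun p => p.1) (fun j => spin (τ j))]
      exact Finset.prod_congr rfl fun j _ => Finset.prod_const _
    have h2 : ∏ p ∈ A, spin (τ p.2) = ∏ j, spin (τ j) ^ (A.filter (fun p => p.2 = j)).card := by
      rw [← Finset.prod_fiberwise' A (fun p => p.2) (fun j => spin (τ j))]
      exact Finset.prod_congr rfl fun j _ => Finset.prod_const _
    rw [Finset.prod_mul_distrib, h1, h2, ← Finset.prod_mul_distrib]
    exact Finset.prod_congr rfl fun j _ => (pow_add _ _ _).symm
  calc (0:ℝ) ≤ ∏ j : Fin N, ∑ b : Bool, spin b ^ ((A.filter (fun p => p.1 = j)).card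
        + (A.filter (fun p => p.2 = j)).card) := by
        apply Finset.prod_nonneg
        intro j _
        rcases Nat.even_or_odd ((A.filter (fun p => p.1 = j)).card
          + (A.filter (fun p => p.2 = j)).card) with h | h
        · simp [spin, h.neg_one_pow]
        · simp [spin, h.neg_one_pow]
    _ = ∑ τ : Fin N → Bool, ∏ j, spin (τ j) ^ ((A.filter (fun p => p.1 = j)).card
        + (A.filter (fun p => p.2 = j)).card) := by
        rw [Finset.prod_univ_sum (fun _ => (Finset.univ : Finset Bool))]
        rw [Fintype.piFinset_univ]
    _ = _ := by
        exact Finset.sum_congr rfl fun τ _ => (key τ).symm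

theorem stmt1 {N : ℕ} (J : Matrix (Fin N) (Fin N) ℝ) (hJ : J.IsHermitian)
    (hdiag : ∀ i, J i i = 0) (hpos : ∀ i j, 0 ≤ J i j)
    (β : ℝ) (hβ : 0 < β) :
    ∑ p ∈ Finset.univ.filter (fun p : Fin N × Fin N => p.1 < p.2),
      Real.log (Real.cosh (β * J p.1 p.2)) ≤ logPartition J β := by
  classical
  set P : Finset (Fin N × Fin N) := Finset.univ.filter (fun p : Fin N × Fin N => p.1 < p.2)
    with hP
  have hsymm : ∀ i j, J i j = J j i := fun i j => by
    have := hJ.apply i j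
    simpa using this.symm
  -- quadForm in terms of pairs
  have hquad : ∀ τ : Fin N → Bool, quadForm J τ =
      2 * ∑ p ∈ P, J p.1 p.2 * spin (τ p.1) * spin (τ p.2) := by
    intro τ
    have hub : quadForm J τ = ∑ p ∈ (Finset.univ : Finset (Fin N × Fin N)),
        J p.1 p.2 * spin (τ p.1) * spin (τ p.2) := by
      rw [← Finset.univ_product_univ, Finset.sum_product]
      rfl
    rw [hub, ← Finset.sum_filter_add_sum_filter_not
      (Finset.univ : Finset (Fin N × Fin N)) (fun p => p.1 < p.2)]
    have hsplit : ∑ p ∈ Finset.univ.filter (fun p : Fin N × Fin N => ¬ p.1 < p.2),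
        J p.1 p.2 * spin (τ p.1) * spin (τ p.2)
        = ∑ p ∈ Finset.univ.filter (fun p : Fin N × Fin N => p.2 < p.1),
          J p.1 p.2 * spin (τ p.1) * spin (τ p.2) := by
      rw [← Finset.sum_filter_add_sum_filter_not
        (Finset.univ.filter (fun p : Fin N × Fin N => ¬ p.1 < p.2)) (fun p => p.2 < p.1)]
      have h1 : (Finset.univ.filter (fun p : Fin N × Fin N => ¬ p.1 < p.2)).filter
          (fun p => p.2 < p.1) = Finset.univ.filter (fun p : Fin N × Fin N => p.2 < p.1) := by
        ext p
        simp only [Finset.mem_filter, Finset.mem_univ, true_and]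
        constructor
        · exact fun h => h.2
        · exact fun h => ⟨not_lt.2 h.le, h⟩
      have h2 : ∑ p ∈ (Finset.univ.filter (fun p : Fin N × Fin N => ¬ p.1 < p.2)).filter
          (fun p => ¬ p.2 < p.1), J p.1 p.2 * spin (τ p.1) * spin (τ p.2) = 0 := by
        apply Finset.sum_eq_zero
        intro p hp
        simp only [Finset.mem_filter, Finset.mem_univ, true_and, not_lt] at hp
        have : p.1 = p.2 := le_antisymm hp.2 hp.1
        rw [← this, hdiag, zero_mul, zero_mul]
      rw [h1, h2, add_zero]
    have hswap : ∑ p ∈ Finset.univ.filter (fun p : Fin N × Fin N => p.2 < p.1),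
        J p.1 p.2 * spin (τ p.1) * spin (τ p.2)
        = ∑ p ∈ P, J p.1 p.2 * spin (τ p.1) * spin (τ p.2) := by
      apply Finset.sum_nbij' (fun p => Prod.swap p) (fun p => Prod.swap p)
      · intro p hp
        simp only [Finset.mem_filter, Finset.mem_univ, true_and, hP] at hp ⊢
        exact hp
      · intro p hp
        simp only [Finset.mem_filter, Finset.mem_univ, true_and, hP] at hp ⊢
        exact hp
      · intro p _; simp
      · intro p _; simp
      · intro p _
        simp only [Prod.fst_swap, Prod.snd_swap]
        rw [hsymm p.2 p.1]
        ring
    rw [hsplit, hswap]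
    ring
  -- pointwise factorization of the exponential
  have hfact : ∀ τ : Fin N → Bool, Real.exp (β / 2 * quadForm J τ) =
      (∏ p ∈ P, Real.cosh (β * J p.1 p.2)) *
      ∏ p ∈ P, (1 + spin (τ p.1) * spin (τ p.2) * Real.tanh (β * J p.1 p.2)) := by
    intro τ
    rw [hquad τ,
      show β / 2 * (2 * ∑ p ∈ P, J p.1 p.2 * spin (τ p.1) * spin (τ p.2))
        = β * ∑ p ∈ P, J p.1 p.2 * spin (τ p.1) * spin (τ p.2) from by ring,
      Finset.mul_sum,
      Finset.sum_congr rfl (fun p _ => show β * (J p.1 p.2 * spin (τ p.1) * spin (τ p.2))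
        = (β * J p.1 p.2) * (spin (τ p.1) * spin (τ p.2)) from by ring),
      Real.exp_sum, ← Finset.prod_mul_distrib]
    apply Finset.prod_congr rfl
    intro p _
    apply exp_mul_pm
    rcases spin_cases (τ p.1) with h1 | h1 <;> rcases spin_cases (τ p.2) with h2 | h2 <;>
      rw [h1, h2] <;> norm_num
  -- the main sum
  have hC : (0:ℝ) < ∏ p ∈ P, Real.cosh (β * J p.1 p.2) :=
    Finset.prod_pos fun p _ => Real.cosh_pos _
  have hM : (2:ℝ) ^ N ≤ ∑ τ : Fin N → Bool,
      ∏ p ∈ P, (1 + spin (τ p.1) * spin (τ p.2) * Real.tanh (β * J p.1 p.2)) := by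
    have hexp : ∀ τ : Fin N → Bool,
        ∏ p ∈ P, (1 + spin (τ p.1) * spin (τ p.2) * Real.tanh (β * J p.1 p.2))
        = ∑ A ∈ P.powerset,
            (∏ p ∈ A, spin (τ p.1) * spin (τ p.2) * Real.tanh (β * J p.1 p.2)) := by
      intro τ
      have := Finset.prod_add
        (fun p : Fin N × Fin N => spin (τ p.1) * spin (τ p.2) * Real.tanh (β * J p.1 p.2))
        (fun _ => (1:ℝ)) P
      simp only [Finset.prod_const_one, mul_one] at this
      rw [← this]
      exact Finset.prod_congr rfl fun p _ => by ring
    calc (2:ℝ) ^ N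
        = ∑ A ∈ P.powerset, (if A = ∅ then (2:ℝ)^N else 0) := by
          rw [Finset.sum_ite_eq' P.powerset (∅ : Finset (Fin N × Fin N))
            (fun _ => (2:ℝ)^N)]
          simp
      _ ≤ ∑ A ∈ P.powerset, (∏ p ∈ A, Real.tanh (β * J p.1 p.2)) *
            (∑ τ : Fin N → Bool, ∏ p ∈ A, spin (τ p.1) * spin (τ p.2)) := by
          apply Finset.sum_le_sum
          intro A hA
          by_cases h : A = ∅
          · subst h
            simp [Fintype.card_fun]
          · simp only [h, if_false]
            apply mul_nonneg
            · apply Finset.prod_nonneg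
              intro p _
              rw [Real.tanh_eq_sinh_div_cosh]
              exact div_nonneg (Real.sinh_nonneg_iff.2 (mul_nonneg hβ.le (hpos _ _))) (Real.cosh_pos _).le
            · exact sum_spin_prod_nonneg A
      _ = ∑ τ : Fin N → Bool,
            ∏ p ∈ P, (1 + spin (τ p.1) * spin (τ p.2) * Real.tanh (β * J p.1 p.2)) := by
          simp_rw [Finset.mul_sum]
          rw [Finset.sum_comm]
          apply Finset.sum_congr rfl
          intro τ _
          rw [hexp τ]
          apply Finset.sum_congr rfl
          intro A _
          rw [← Finset.prod_mul_distrib]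
          exact Finset.prod_congr rfl fun p _ => by ring
  -- conclude
  have hS : (∏ p ∈ P, Real.cosh (β * J p.1 p.2)) ≤
      (2:ℝ)⁻¹ ^ N * ∑ τ : Fin N → Bool, Real.exp (β / 2 * quadForm J τ) := by
    have : ∑ τ : Fin N → Bool, Real.exp (β / 2 * quadForm J τ)
        = (∏ p ∈ P, Real.cosh (β * J p.1 p.2)) *
          ∑ τ : Fin N → Bool,
            ∏ p ∈ P, (1 + spin (τ p.1) * spin (τ p.2) * Real.tanh (β * J p.1 p.2)) := by
      rw [Finset.mul_sum]
      exact Finset.sum_congr rfl fun τ _ => hfact τ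
    rw [this]
    calc (∏ p ∈ P, Real.cosh (β * J p.1 p.2))
        = (2:ℝ)⁻¹ ^ N * ((∏ p ∈ P, Real.cosh (β * J p.1 p.2)) * (2:ℝ)^N) := by
          field_simp
          rw [← mul_pow]; norm_num
      _ ≤ _ := by
          apply mul_le_mul_of_nonneg_left _ (by positivity)
          exact mul_le_mul_of_nonneg_left hM hC.le
  have hlog : ∑ p ∈ P, Real.log (Real.cosh (β * J p.1 p.2))
      = Real.log (∏ p ∈ P, Real.cosh (β * J p.1 p.2)) :=
    (Real.log_prod fun p _ => (Real.cosh_pos _).ne').symm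
  rw [hlog]
  unfold logPartition
  exact Real.log_le_log hC hS
end
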